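/- Let k be a field, F : kⁿ → kⁿ and H : kⁿ → k linear. Then for each v ∈ kⁿ, the stream σ(m) = H(Fᵐ(v)) is rational, i.e., there exist polynomial streams ρ, τ (streams with finitely many nonzero entries) with τ(0) ≠ 0 such that σ × τ = ρ. -/

import Mathlib

def conv {A : Type*} [Semiring A] (σ τ : ℕ → A) : ℕ → A :=
  fun n => ∑ i ∈ Finset.range (n + 1), σ i * τ (n - i)

def cst {A : Type*} [Semiring A] (a : A) : ℕ → A :=
  fun n => if n = 0 then a else 0

def Xs {A : Type*} [Semiring A] : ℕ → A :=
  fun n => if n = 1 then 1 else 0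

def tl {A : Type*} (σ : ℕ → A) : ℕ → A :=
  fun n => σ (n + 1)

theorem stmt13 {k : Type*} [Field k] {n : ℕ}
    (F : (Fin n → k) →ₗ[k] (Fin n → k)) (H : (Fin n → k) →ₗ[k] k)
    (v : Fin n → k) :
    ∃ ρ τ : ℕ → k, (Function.support ρ).Finite ∧ (Function.support τ).Finite ∧
      τ 0 ≠ 0 ∧ conv (fun m => H ((⇑F)^[m] v)) τ = ρ := by
  classical
  set σ : ℕ → k := fun m => H ((⇑F)^[m] v) with hσ
  set p := LinearMap.charpoly F with hp
  set N := p.natDegree with hN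
  set τ : ℕ → k := fun j => if j ≤ N then p.coeff (N - j) else 0 with hτ
  have hmonic : p.Monic := LinearMap.charpoly_monic F
  have haeval : Polynomial.aeval F p = 0 := LinearMap.aeval_self_charpoly F
  have hτ0 : τ 0 = 1 := by simp [hτ, hmonic.coeff_natDegree]; exact hmonic.coeff_natDegree
  have key : ∀ m, N ≤ m → conv σ τ m = 0 := by
    intro m hm
    have h1 : conv σ τ m = ∑ j ∈ Finset.range (m + 1), σ (m - j) * τ j := by
      rw [conv, ← Finset.sum_range_reflect]
      apply Finset.sum_congr rfl
      intro j hj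
      simp only [Finset.mem_range] at hj
      congr 2 <;> omega
    have h2 : (∑ j ∈ Finset.range (m + 1), σ (m - j) * τ j)
        = ∑ j ∈ Finset.range (N + 1), σ (m - j) * τ j := by
      symm
      apply Finset.sum_subset
      · intro x hx
        simp only [Finset.mem_range] at *
        omega
      · intro j hj hj'
        simp only [Finset.mem_range] at hj hj'
        have : τ j = 0 := by rw [hτ]; exact if_neg (by omega)
        simp [this]
    have h3 : (∑ j ∈ Finset.range (N + 1), σ (m - j) * τ j)
        = ∑ d ∈ Finset.range (N + 1), p.coeff d * σ (m - N + d) := by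
      rw [← Finset.sum_range_reflect]
      apply Finset.sum_congr rfl
      intro d hd
      simp only [Finset.mem_range] at hd
      have hd' : d ≤ N := by omega
      have h4 : N + 1 - 1 - d = N - d := by omega
      rw [h4]
      have h5 : τ (N - d) = p.coeff d := by
        rw [hτ]
        simp only [if_pos (by omega : N - d ≤ N)]
        congr 1
        omega
      rw [h5, mul_comm]
      congr 2
      omega
    rw [h1, h2, h3]
    set w := (⇑F)^[m - N] v with hw
    have h6 : ∀ d, σ (m - N + d) = H ((F ^ d) w) := by
      intro d
      rw [hσ]
      simp only
      rw [add_comm, Function.iterate_add_apply, ← hw, ← Module.End.pow_apply]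
    calc (∑ d ∈ Finset.range (N + 1), p.coeff d * σ (m - N + d))
        = ∑ d ∈ Finset.range (N + 1), H (p.coeff d • (F ^ d) w) := by
          apply Finset.sum_congr rfl
          intro d _
          rw [h6 d, map_smul, smul_eq_mul]
      _ = H ((∑ d ∈ Finset.range (N + 1), p.coeff d • F ^ d) w) := by
          rw [LinearMap.sum_apply, map_sum]
          apply Finset.sum_congr rfl
          intro d _
          rw [LinearMap.smul_apply]
      _ = H ((Polynomial.aeval F p) w) := by
          rw [Polynomial.aeval_eq_sum_range]
      _ = 0 := by rw [haeval]; simp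
  refine ⟨conv σ τ, τ, ?_, ?_, ?_, rfl⟩
  · apply Set.Finite.subset (Finset.range N).finite_toSet
    intro m hm
    simp only [Function.mem_support] at hm
    simp only [Finset.coe_range, Set.mem_Iio]
    by_contra h
    exact hm (key m (by omega))
  · apply Set.Finite.subset (Finset.range (N + 1)).finite_toSet
    intro j hj
    simp only [Function.mem_support, hτ] at hj
    simp only [Finset.coe_range, Set.mem_Iio]
    by_contra h
    exact hj (if_neg (by omega))
  · rw [hτ0]; exact one_ne_zero
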